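/- D_2^L(λ)·M_μ^L(λ)·D_1^L(λ)^T = P(λ) identically in λ, where D_1^L(λ) and D_2^L(λ) denote the block rows whose transposes are the block columns D_1^L(λ)^T and D_2^L(λ)^T. -/

import Mathlib

open Polynomial Matrix

noncomputable section

/-- `gam x j` is the linear polynomial `γ_j(λ) = λ - x_j` (1-based node index). -/
def gam (x : ℕ → ℂ) (j : ℕ) : Polynomial ℂ := X - C (x j)

/-- The barycentric weight `w_i = 1 / ∏_{j ≠ i, 1 ≤ j ≤ k+1} (x_i - x_j)`. -/
def wbar (k : ℕ) (x : ℕ → ℂ) (i : ℕ) : ℂ :=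
  (∏ j ∈ (Finset.Icc 1 (k + 1)).erase i, (x i - x j))⁻¹

/-- The matrix pencil `K_1^L(λ)`: `(k-μ-1) × (k-μ)` block matrix with `n × n` blocks,
`(i,i)` block `γ_{k+2-i}(λ) I_n`, `(i,i+1)` block `-γ_{k-i}(λ) I_n` (1-based). -/
def K1L (k μ n : ℕ) (x : ℕ → ℂ) :
    Matrix (Fin (k - μ - 1) × Fin n) (Fin (k - μ) × Fin n) (Polynomial ℂ) :=
  Matrix.of fun p q =>
    (if (q.1 : ℕ) = (p.1 : ℕ) then gam x (k + 1 - (p.1 : ℕ))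
      else if (q.1 : ℕ) = (p.1 : ℕ) + 1 then -gam x (k - 1 - (p.1 : ℕ)) else 0) *
    (if p.2 = q.2 then 1 else 0)

/-- The matrix pencil `K_2^L(λ)`: `μ × (μ+1)` block matrix with `m × m` blocks,
`(i,i)` block `γ_{μ+3-i}(λ) I_m`, `(i,i+1)` block `-γ_{μ+1-i}(λ) I_m` (1-based). -/
def K2L (μ m : ℕ) (x : ℕ → ℂ) :
    Matrix (Fin μ × Fin m) (Fin (μ + 1) × Fin m) (Polynomial ℂ) :=
  Matrix.of fun p q =>
    (if (q.1 : ℕ) = (p.1 : ℕ) then gam x (μ + 2 - (p.1 : ℕ))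
      else if (q.1 : ℕ) = (p.1 : ℕ) + 1 then -gam x (μ - (p.1 : ℕ)) else 0) *
    (if p.2 = q.2 then 1 else 0)

/-- `D_1^L(λ)^T`: block column with `k-μ` blocks whose `i`-th block (1-based) is
`(n_{μ+1}^{k+1}(λ)/(γ_{k+2-i}(λ)γ_{k+1-i}(λ))) I_n`, the quotient being the product of
the factors `γ_ℓ`, `μ+1 ≤ ℓ ≤ k+1`, with the two indicated factors deleted. -/
def D1LT (k μ n : ℕ) (x : ℕ → ℂ) :
    Matrix (Fin (k - μ) × Fin n) (Fin n) (Polynomial ℂ) :=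
  Matrix.of fun p t =>
    (∏ l ∈ ((Finset.Icc (μ + 1) (k + 1)).erase (k + 1 - (p.1 : ℕ))).erase (k - (p.1 : ℕ)),
        gam x l) *
    (if p.2 = t then 1 else 0)

/-- `D_2^L(λ)^T`: block column with `μ+1` blocks whose `i`-th block (1-based) is
`(n_1^{μ+2}(λ)/(γ_{μ+3-i}(λ)γ_{μ+2-i}(λ))) I_m`. -/
def D2LT (μ m : ℕ) (x : ℕ → ℂ) :
    Matrix (Fin (μ + 1) × Fin m) (Fin m) (Polynomial ℂ) :=
  Matrix.of fun p t =>
    (∏ l ∈ ((Finset.Icc 1 (μ + 2)).erase (μ + 2 - (p.1 : ℕ))).erase (μ + 1 - (p.1 : ℕ)),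
        gam x l) *
    (if p.2 = t then 1 else 0)

/-- The Lagrange interpolation matrix polynomial
`P(λ) = Σ_{i=1}^{k+1} w_i P_i ∏_{j ≠ i} (λ - x_j)`. -/
def PmatL (k m n : ℕ) (x : ℕ → ℂ) (P : ℕ → Matrix (Fin m) (Fin n) ℂ) :
    Matrix (Fin m) (Fin n) (Polynomial ℂ) :=
  ∑ i ∈ Finset.Icc 1 (k + 1),
    (C (wbar k x i) * ∏ j ∈ (Finset.Icc 1 (k + 1)).erase i, gam x j) • (P i).map C

/-- The body `M_μ^L(λ)`: `(μ+1) × (k-μ)` block matrix with `(1,1)` block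
`w_{k+1}γ_k(λ)P_{k+1} + w_kγ_{k+1}(λ)P_k`, `(1,j)` block `w_{k+1-j}γ_{k+2-j}(λ)P_{k+1-j}`
for `2 ≤ j ≤ k-μ`, `(i,k-μ)` block `w_{μ+2-i}γ_{μ+3-i}(λ)P_{μ+2-i}` for `2 ≤ i ≤ μ+1`,
and zero blocks elsewhere (1-based block indices). -/
def MmuL (k μ m n : ℕ) (x : ℕ → ℂ) (P : ℕ → Matrix (Fin m) (Fin n) ℂ) :
    Matrix (Fin (μ + 1) × Fin m) (Fin (k - μ) × Fin n) (Polynomial ℂ) :=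
  Matrix.of fun p q =>
    if (p.1 : ℕ) = 0 ∧ (q.1 : ℕ) = 0 then
      C (wbar k x (k + 1)) * gam x k * C (P (k + 1) p.2 q.2) +
        C (wbar k x k) * gam x (k + 1) * C (P k p.2 q.2)
    else if (p.1 : ℕ) = 0 then
      C (wbar k x (k - (q.1 : ℕ))) * gam x (k + 1 - (q.1 : ℕ)) * C (P (k - (q.1 : ℕ)) p.2 q.2)
    else if (q.1 : ℕ) = k - μ - 1 then
      C (wbar k x (μ + 1 - (p.1 : ℕ))) * gam x (μ + 2 - (p.1 : ℕ)) *
        C (P (μ + 1 - (p.1 : ℕ)) p.2 q.2)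
    else 0

/-- The colleague Lagrange pencil `L_P^μ(λ) = [[M_μ^L(λ), K_2^L(λ)^T], [K_1^L(λ), 0]]`. -/
def LPmu (k μ m n : ℕ) (x : ℕ → ℂ) (P : ℕ → Matrix (Fin m) (Fin n) ℂ) :
    Matrix ((Fin (μ + 1) × Fin m) ⊕ (Fin (k - μ - 1) × Fin n))
      ((Fin (k - μ) × Fin n) ⊕ (Fin μ × Fin m)) (Polynomial ℂ) :=
  Matrix.fromBlocks (MmuL k μ m n x P) (K2L μ m x).transpose (K1L k μ n x) 0

/-- Product of `gam x l` over an interval `[a, b)`. -/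
def Gp (x : ℕ → ℂ) (a b : ℕ) : Polynomial ℂ := ∏ l ∈ Finset.Ico a b, gam x l

lemma Gp_mul (x : ℕ → ℂ) {a b c : ℕ} (hab : a ≤ b) (hbc : b ≤ c) :
    Gp x a b * Gp x b c = Gp x a c := Finset.prod_Ico_consecutive _ hab hbc

lemma Gp_self (x : ℕ → ℂ) (a : ℕ) : Gp x a a = 1 := by simp [Gp]

lemma Gp_succ (x : ℕ → ℂ) (a : ℕ) : Gp x a (a + 1) = gam x a := by simp [Gp]

lemma Gp_bot (x : ℕ → ℂ) {a b : ℕ} (h : a < b) :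
    Gp x a b = gam x a * Gp x (a + 1) b := Finset.prod_eq_prod_Ico_succ_bot h _

lemma icc_erase_pair (a b c : ℕ) (hac : a ≤ c) (hcb : c + 1 ≤ b) :
    ((Finset.Icc a b).erase (c + 1)).erase c = Finset.Ico a c ∪ Finset.Ico (c + 2) (b + 1) := by
  ext l
  simp only [Finset.mem_erase, Finset.mem_Icc, Finset.mem_union, Finset.mem_Ico]
  omega

lemma prod_icc_erase_pair (x : ℕ → ℂ) {a b c : ℕ} (hac : a ≤ c) (hcb : c + 1 ≤ b) :
    ∏ l ∈ ((Finset.Icc a b).erase (c + 1)).erase c, gam x l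
      = Gp x a c * Gp x (c + 2) (b + 1) := by
  rw [icc_erase_pair a b c hac hcb, Finset.prod_union]
  · rfl
  · rw [Finset.disjoint_left]
    intro l hl hl'
    simp only [Finset.mem_Ico] at hl hl'
    omega

lemma prod_icc_erase_one (x : ℕ → ℂ) {a b c : ℕ} (hac : a ≤ c) (hcb : c ≤ b) :
    ∏ l ∈ (Finset.Icc a b).erase c, gam x l = Gp x a c * Gp x (c + 1) (b + 1) := by
  have : (Finset.Icc a b).erase c = Finset.Ico a c ∪ Finset.Ico (c + 1) (b + 1) := by
    ext l
    simp only [Finset.mem_erase, Finset.mem_Icc, Finset.mem_union, Finset.mem_Ico]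
    omega
  rw [this, Finset.prod_union]
  · rfl
  · rw [Finset.disjoint_left]
    intro l hl hl'
    simp only [Finset.mem_Ico] at hl hl'
    omega

lemma d2_eq (x : ℕ → ℂ) {μ i : ℕ} (hi : i ≤ μ) :
    ∏ l ∈ ((Finset.Icc 1 (μ + 2)).erase (μ + 2 - i)).erase (μ + 1 - i), gam x l
      = Gp x 1 (μ + 1 - i) * Gp x (μ + 3 - i) (μ + 3) := by
  have h1 : μ + 2 - i = (μ + 1 - i) + 1 := by omega
  have h2 : μ + 3 - i = (μ + 1 - i) + 2 := by omega
  rw [h1, h2, prod_icc_erase_pair x (by omega) (by omega)]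

lemma d1_eq (x : ℕ → ℂ) {k μ j : ℕ} (hμk : μ + 1 ≤ k) (hj : j ≤ k - μ - 1) :
    ∏ l ∈ ((Finset.Icc (μ + 1) (k + 1)).erase (k + 1 - j)).erase (k - j), gam x l
      = Gp x (μ + 1) (k - j) * Gp x (k + 2 - j) (k + 2) := by
  have h1 : k + 1 - j = (k - j) + 1 := by omega
  have h2 : k + 2 - j = (k - j) + 2 := by omega
  rw [h1, h2, prod_icc_erase_pair x (by omega) (by omega)]


lemma block_sum {R : Type*} [CommRing R] (K μ : ℕ) (hK : 1 ≤ K) (d2 d1 : ℕ → R)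
    (A : R) (B Cc : ℕ → R) :
    ∑ j : Fin K, (∑ i : Fin (μ + 1), d2 ↑i *
        (if (i : ℕ) = 0 ∧ (j : ℕ) = 0 then A
          else if (i : ℕ) = 0 then B ↑j
          else if (j : ℕ) = K - 1 then Cc ↑i else 0)) * d1 ↑j
      = d2 0 * A * d1 0 + (∑ j ∈ Finset.Ico 1 K, d2 0 * B j * d1 j)
        + ∑ i ∈ Finset.Ico 1 (μ + 1), d2 i * Cc i * d1 (K - 1) := by
  obtain ⟨ν, rfl⟩ : ∃ ν, K = ν + 1 := ⟨K - 1, by omega⟩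
  simp only [Nat.add_sub_cancel]
  rw [Fin.sum_univ_eq_sum_range (fun j => (∑ i : Fin (μ + 1), d2 ↑i *
        (if (i : ℕ) = 0 ∧ j = 0 then A
          else if (i : ℕ) = 0 then B j
          else if j = ν then Cc ↑i else 0)) * d1 j) (ν + 1)]
  have inner : ∀ j : ℕ, (∑ i : Fin (μ + 1), d2 ↑i *
        (if (i : ℕ) = 0 ∧ j = 0 then A
          else if (i : ℕ) = 0 then B j
          else if j = ν then Cc ↑i else 0))
      = ∑ i ∈ Finset.range (μ + 1), d2 i *
        (if i = 0 ∧ j = 0 then A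
          else if i = 0 then B j
          else if j = ν then Cc i else 0) := fun j =>
    Fin.sum_univ_eq_sum_range (fun i => d2 i *
        (if i = 0 ∧ j = 0 then A
          else if i = 0 then B j
          else if j = ν then Cc i else 0)) (μ + 1)
  simp only [inner]
  have inner2 : ∀ j : ℕ, (∑ i ∈ Finset.range (μ + 1), d2 i *
        (if i = 0 ∧ j = 0 then A
          else if i = 0 then B j
          else if j = ν then Cc i else 0))
      = (if j = ν then ∑ i ∈ Finset.range μ, d2 (i + 1) * Cc (i + 1) else 0)
          + (if j = 0 then d2 0 * A else d2 0 * B j) := by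
    intro j
    rw [Finset.sum_range_succ']
    congr 1
    · simp only [Nat.succ_ne_zero, false_and, if_false]
      split_ifs with hj <;> simp [hj]
    · simp only [eq_self_iff_true, true_and, if_true, mul_ite]
  simp only [inner2, add_mul, Finset.sum_add_distrib, ite_mul, zero_mul,
    Finset.sum_ite_eq', Finset.mem_range, Nat.lt_succ_self, if_true]
  rw [Finset.sum_range_succ' (fun j => if j = 0 then d2 0 * A * d1 j else d2 0 * B j * d1 j) ν]
  simp only [Nat.succ_ne_zero, if_false, if_true, eq_self_iff_true]
  have e1 : ∑ i ∈ Finset.Ico 1 (μ + 1), d2 i * Cc i * d1 ν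
      = ∑ i ∈ Finset.range μ, d2 (i + 1) * Cc (i + 1) * d1 ν := by
    rw [Finset.sum_Ico_eq_sum_range]
    simp only [Nat.add_sub_cancel]
    exact Finset.sum_congr rfl fun i _ => by rw [Nat.add_comm]
  have e2 : ∑ j ∈ Finset.Ico 1 (ν + 1), d2 0 * B j * d1 j
      = ∑ j ∈ Finset.range ν, d2 0 * B (j + 1) * d1 (j + 1) := by
    rw [Finset.sum_Ico_eq_sum_range]
    simp only [Nat.add_sub_cancel]
    exact Finset.sum_congr rfl fun i _ => by rw [Nat.add_comm]
  rw [e1, e2, Finset.sum_mul]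
  ring

/-- Per-node term of the Lagrange interpolant at entry `(s,t)`. -/
def Fnode (k : ℕ) (x : ℕ → ℂ) (p : ℕ → ℂ) (v : ℕ) : Polynomial ℂ :=
  Polynomial.C (wbar k x v) * (Gp x 1 v * Gp x (v + 1) (k + 2)) * Polynomial.C (p v)

set_option maxHeartbeats 1000000 in
/-- `D_2^L(λ) M_μ^L(λ) D_1^L(λ)^T = P(λ)` identically in `λ`. -/
theorem lagrange_body_product
    (k μ m n : ℕ) (hk : 2 ≤ k) (hμ : μ ≤ k - 1) (hm : 0 < m) (hn : 0 < n)
    (x : ℕ → ℂ)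
    (hx : ∀ i j : ℕ, 1 ≤ i → i ≤ k + 1 → 1 ≤ j → j ≤ k + 1 → x i = x j → i = j)
    (P : ℕ → Matrix (Fin m) (Fin n) ℂ) :
    (D2LT μ m x).transpose * MmuL k μ m n x P * D1LT k μ n x = PmatL k m n x P := by
  have hμk : μ + 1 ≤ k := by omega
  refine Matrix.ext fun s t => ?_
  simp only [Matrix.mul_apply, Matrix.transpose_apply, D2LT, D1LT, Matrix.of_apply,
    Fintype.sum_prod_type, ite_mul, mul_ite, mul_one, mul_zero, zero_mul,
    Finset.sum_ite_eq, Finset.sum_ite_eq', Finset.mem_univ, if_true,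
    Finset.sum_ite_irrel, Finset.sum_const_zero]
  simp only [MmuL, Matrix.of_apply]
  refine Eq.trans (block_sum (k - μ) μ (by omega)
    (fun i => ∏ l ∈ ((Finset.Icc 1 (μ + 2)).erase (μ + 2 - i)).erase (μ + 1 - i), gam x l)
    (fun j => ∏ l ∈ ((Finset.Icc (μ + 1) (k + 1)).erase (k + 1 - j)).erase (k - j), gam x l)
    (C (wbar k x (k + 1)) * gam x k * C (P (k + 1) s t)
      + C (wbar k x k) * gam x (k + 1) * C (P k s t))
    (fun j => C (wbar k x (k - j)) * gam x (k + 1 - j) * C (P (k - j) s t))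
    (fun i => C (wbar k x (μ + 1 - i)) * gam x (μ + 2 - i) * C (P (μ + 1 - i) s t))) ?_
  simp only [Nat.sub_zero]
  -- preliminary product identities
  have hd20 : ∏ l ∈ ((Finset.Icc 1 (μ + 2)).erase (μ + 2)).erase (μ + 1), gam x l
      = Gp x 1 (μ + 1) := by
    have h := prod_icc_erase_pair x (a := 1) (b := μ + 2) (c := μ + 1) (by omega) (by omega)
    rw [show μ + 1 + 1 = μ + 2 from by omega, show μ + 1 + 2 = μ + 3 from by omega,
      show μ + 2 + 1 = μ + 3 from by omega] at h
    rw [h, Gp_self, mul_one]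
  have hd10 : ∏ l ∈ ((Finset.Icc (μ + 1) (k + 1)).erase (k + 1)).erase k, gam x l
      = Gp x (μ + 1) k := by
    have h := prod_icc_erase_pair x (a := μ + 1) (b := k + 1) (c := k) (by omega) (by omega)
    rw [show k + 1 + 1 = k + 2 from by omega] at h
    rw [h, Gp_self, mul_one]
  have hrw1 : k + 1 - (k - μ - 1) = μ + 2 := by omega
  have hrw2 : k - (k - μ - 1) = μ + 1 := by omega
  have hd1l : ∏ l ∈ ((Finset.Icc (μ + 1) (k + 1)).erase (μ + 2)).erase (μ + 1), gam x l
      = Gp x (μ + 3) (k + 2) := by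
    have h := prod_icc_erase_pair x (a := μ + 1) (b := k + 1) (c := μ + 1) le_rfl (by omega)
    rw [show μ + 1 + 1 = μ + 2 from by omega, show μ + 1 + 2 = μ + 3 from by omega,
      show k + 1 + 1 = k + 2 from by omega] at h
    rw [h, Gp_self, one_mul]
  -- rewrite the RHS as a sum of Fnode values
  have hRHS : PmatL k m n x P s t
      = ∑ v ∈ Finset.Ico 1 (k + 2), Fnode k x (fun v => P v s t) v := by
    simp only [PmatL, Matrix.sum_apply, Matrix.smul_apply, smul_eq_mul, Matrix.map_apply]
    rw [show (∑ v ∈ Finset.Ico 1 (k + 2), Fnode k x (fun v => P v s t) v)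
        = ∑ v ∈ Finset.Icc 1 (k + 1), Fnode k x (fun v => P v s t) v from by
      refine Finset.sum_congr ?_ fun _ _ => rfl
      ext l; simp only [Finset.mem_Icc, Finset.mem_Ico]; omega]
    refine Finset.sum_congr rfl fun v hv => ?_
    simp only [Finset.mem_Icc] at hv
    rw [prod_icc_erase_one x (show 1 ≤ v from hv.1) (show v ≤ k + 1 from hv.2), Fnode,
      show k + 1 + 1 = k + 2 from by omega]
  rw [hRHS, hd20, hd10, hrw1, hrw2, hd1l]
  have hsplit : ∑ v ∈ Finset.Ico 1 (k + 2), Fnode k x (fun v => P v s t) v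
      = (Fnode k x (fun v => P v s t) (k + 1) + Fnode k x (fun v => P v s t) k)
        + (∑ v ∈ Finset.Ico (μ + 1) k, Fnode k x (fun v => P v s t) v)
        + ∑ v ∈ Finset.Ico 1 (μ + 1), Fnode k x (fun v => P v s t) v := by
    rw [← Finset.sum_Ico_consecutive (fun v => Fnode k x (fun v => P v s t) v)
        (show 1 ≤ μ + 1 by omega) (show μ + 1 ≤ k + 2 by omega),
      ← Finset.sum_Ico_consecutive (fun v => Fnode k x (fun v => P v s t) v)
        (show μ + 1 ≤ k by omega) (show k ≤ k + 2 by omega),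
      show Finset.Ico k (k + 2) = {k, k + 1} from by
        ext l; simp only [Finset.mem_Ico, Finset.mem_insert, Finset.mem_singleton]; omega,
      Finset.sum_insert (by simp), Finset.sum_singleton]
    ring
  rw [hsplit]
  refine congrArg₂ (· + ·) ?_ ?_
  refine congrArg₂ (· + ·) ?_ ?_
  · -- nodes k+1 and k
    have ha : Gp x 1 k = Gp x 1 (μ + 1) * Gp x (μ + 1) k :=
      (Gp_mul x (by omega) (by omega)).symm
    have hb : Gp x 1 (k + 1) = Gp x 1 k * gam x k := by
      rw [← Gp_succ x k]; exact (Gp_mul x (by omega) (by omega)).symm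
    have hc : Gp x (k + 1) (k + 2) = gam x (k + 1) := by
      have h := Gp_succ x (k + 1); rw [show k + 1 + 1 = k + 2 from by omega] at h; exact h
    simp only [Fnode]
    rw [hb, ha, hc, Gp_self]
    ring
  · -- middle nodes μ+1 ≤ v ≤ k-1
    refine Finset.sum_nbij' (fun j => k - j) (fun v => k - v) ?_ ?_ ?_ ?_ ?_
    · intro a ha; simp only [Finset.mem_Ico] at *; omega
    · intro a ha; simp only [Finset.mem_Ico] at *; omega
    · intro a ha; simp only [Finset.mem_Ico] at ha; show k - (k - a) = a; omega
    · intro a ha; simp only [Finset.mem_Ico] at ha; show k - (k - a) = a; omega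
    · intro j hj
      simp only [Finset.mem_Ico] at hj
      rw [d1_eq x hμk (by omega),
        show k + 1 - j = (k - j) + 1 from by omega,
        show k + 2 - j = (k - j) + 2 from by omega]
      simp only [Fnode]
      have h1 : Gp x 1 (μ + 1) * Gp x (μ + 1) (k - j) = Gp x 1 (k - j) :=
        Gp_mul x (by omega) (by omega)
      have h2 : gam x ((k - j) + 1) * Gp x ((k - j) + 2) (k + 2) = Gp x ((k - j) + 1) (k + 2) := by
        rw [Gp_bot x (show (k - j) + 1 < k + 2 from by omega),
          show k - j + 1 + 1 = k - j + 2 from by omega]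
      rw [← h1, ← h2]
      ring
  · -- low nodes 1 ≤ v ≤ μ
    refine Finset.sum_nbij' (fun i => μ + 1 - i) (fun v => μ + 1 - v) ?_ ?_ ?_ ?_ ?_
    · intro a ha; simp only [Finset.mem_Ico] at *; omega
    · intro a ha; simp only [Finset.mem_Ico] at *; omega
    · intro a ha; simp only [Finset.mem_Ico] at ha; show μ + 1 - (μ + 1 - a) = a; omega
    · intro a ha; simp only [Finset.mem_Ico] at ha; show μ + 1 - (μ + 1 - a) = a; omega
    · intro i hi
      simp only [Finset.mem_Ico] at hi
      rw [d2_eq x (show i ≤ μ from by omega),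
        show μ + 2 - i = (μ + 1 - i) + 1 from by omega,
        show μ + 3 - i = (μ + 1 - i) + 2 from by omega]
      simp only [Fnode]
      have h2 : gam x ((μ + 1 - i) + 1) * (Gp x ((μ + 1 - i) + 2) (μ + 3) * Gp x (μ + 3) (k + 2))
          = Gp x ((μ + 1 - i) + 1) (k + 2) := by
        rw [Gp_mul x (show (μ + 1 - i) + 2 ≤ μ + 3 from by omega) (show μ + 3 ≤ k + 2 from by omega),
          Gp_bot x (show (μ + 1 - i) + 1 < k + 2 from by omega),
          show μ + 1 - i + 1 + 1 = μ + 1 - i + 2 from by omega]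
      rw [← h2]
      ring
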